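/- arXiv:2309.10855 — 2 statements merged into one kernel-verified Lean document; each statement's English description precedes it below -/
import Mathlib

section
/- Let T be a lattice triangle in Z^2 whose only lattice points on the boundary are its three vertices, and which contains exactly one lattice point p_r in its strict interior. Then p_r is the centroid: p_r = (p_i + p_j + p_k)/3, where p_i, p_j, p_k are the vertices. -/
/-- Embedding of the lattice `ℤ²` into `ℝ²`. -/
def latticeEmbed (p : ℤ × ℤ) : ℝ × ℝ := ((p.1 : ℝ), (p.2 : ℝ))

/-- A lattice triangle in `ℤ²` whose only boundary lattice points are its three
vertices and which contains exactly one lattice point in its strict interior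
has that interior point equal to the centroid of the vertices. -/
theorem interior_point_of_onePointTriangle_is_centroid
    (v₁ v₂ v₃ : ℤ × ℤ)
    (hindep : (v₂.1 - v₁.1) * (v₃.2 - v₁.2) - (v₂.2 - v₁.2) * (v₃.1 - v₁.1) ≠ 0)
    (T : Set (ℝ × ℝ))
    (hT : T = convexHull ℝ {latticeEmbed v₁, latticeEmbed v₂, latticeEmbed v₃})
    (hbdry : ∀ p : ℤ × ℤ, latticeEmbed p ∈ frontier T → p = v₁ ∨ p = v₂ ∨ p = v₃)
    (hint : ∃! p : ℤ × ℤ, latticeEmbed p ∈ interior T) :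
    ∀ p : ℤ × ℤ, latticeEmbed p ∈ interior T → (3 : ℤ) • p = v₁ + v₂ + v₃ := by
  intro p hp
  have hD : ((v₂.1 : ℝ) - v₁.1) * ((v₃.2 : ℝ) - v₁.2)
      - ((v₂.2 : ℝ) - v₁.2) * ((v₃.1 : ℝ) - v₁.1) ≠ 0 := by
    exact_mod_cast hindep
  set f : Fin 3 → ℝ × ℝ := ![latticeEmbed v₁, latticeEmbed v₂, latticeEmbed v₃] with hf
  -- affine independence
  have hind : AffineIndependent ℝ f := by
    rw [affineIndependent_iff_of_fintype]
    intro w hw hws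
    rw [Finset.univ.weightedVSub_eq_linear_combination hw] at hws
    simp only [Fin.sum_univ_three, hf, Matrix.cons_val_zero, Matrix.cons_val_one,
      Matrix.head_cons, Matrix.cons_val_two, Matrix.tail_cons, latticeEmbed,
      Prod.smul_mk, Prod.mk_add_mk, Prod.ext_iff, Prod.fst_zero, Prod.snd_zero,
      smul_eq_mul] at hws hw
    obtain ⟨h1, h2⟩ := hws
    have e1 : w 1 * ((v₂.1:ℝ) - v₁.1) + w 2 * ((v₃.1:ℝ) - v₁.1) = 0 := by
      have h0 : w 0 = - w 1 - w 2 := by linarith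
      rw [h0] at h1; ring_nf at h1 ⊢; linarith
    have e2 : w 1 * ((v₂.2:ℝ) - v₁.2) + w 2 * ((v₃.2:ℝ) - v₁.2) = 0 := by
      have h0 : w 0 = - w 1 - w 2 := by linarith
      rw [h0] at h2; ring_nf at h2 ⊢; linarith
    have hw1 : w 1 = 0 := by
      have h : w 1 * (((v₂.1 : ℝ) - v₁.1) * ((v₃.2 : ℝ) - v₁.2)
          - ((v₂.2 : ℝ) - v₁.2) * ((v₃.1 : ℝ) - v₁.1)) = 0 := by
        linear_combination ((v₃.2:ℝ) - v₁.2) * e1 - ((v₃.1:ℝ) - v₁.1) * e2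
      exact (mul_eq_zero.1 h).resolve_right hD
    have hw2 : w 2 = 0 := by
      have h : w 2 * (((v₂.1 : ℝ) - v₁.1) * ((v₃.2 : ℝ) - v₁.2)
          - ((v₂.2 : ℝ) - v₁.2) * ((v₃.1 : ℝ) - v₁.1)) = 0 := by
        linear_combination -((v₂.2:ℝ) - v₁.2) * e1 + ((v₂.1:ℝ) - v₁.1) * e2
      exact (mul_eq_zero.1 h).resolve_right hD
    intro i; fin_cases i <;> simp_all
  have htop : affineSpan ℝ (Set.range f) = ⊤ := by
    rw [hind.affineSpan_eq_top_iff_card_eq_finrank_add_one]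
    simp
  set B : AffineBasis (Fin 3) ℝ (ℝ × ℝ) := ⟨f, hind, htop⟩ with hB
  have hBc : (B : Fin 3 → ℝ × ℝ) = f := rfl
  have hrange : Set.range f = {latticeEmbed v₁, latticeEmbed v₂, latticeEmbed v₃} := by
    ext z
    constructor
    · rintro ⟨i, rfl⟩; fin_cases i <;> simp [hf]
    · rintro (rfl | rfl | rfl)
      exacts [⟨0, by simp [hf]⟩, ⟨1, by simp [hf]⟩, ⟨2, by simp [hf]⟩]
  have hTr : T = convexHull ℝ (Set.range (B : Fin 3 → ℝ × ℝ)) := by rw [hT, hBc, hrange]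
  have hInt : interior T = {x | ∀ i, 0 < B.coord i x} := by rw [hTr, B.interior_convexHull]
  have hCl : T = {x | ∀ i, 0 ≤ B.coord i x} := by rw [hTr, B.convexHull_eq_nonneg_coord]
  have hclosed : IsClosed T := by rw [hT]; exact (Set.toFinite _).isClosed_convexHull (𝕜 := ℝ)
  have hco : ∀ i j : Fin 3, B.coord i (f j) = if i = j then 1 else 0 := by
    intro i j; rw [← hBc]; exact B.coord_apply i j
  have hc1 : ∀ (j : Fin 3) (x y : ℝ × ℝ),
      B.coord j (x + (x - y)) = 2 * B.coord j x - B.coord j y := by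
    intro j x y
    have h1 : x + (x - y) = (x - y) +ᵥ x := by rw [vadd_eq_add]; abel
    rw [h1, AffineMap.map_vadd, ← vsub_eq_sub, AffineMap.linearMap_vsub]
    simp [vsub_eq_sub, vadd_eq_add]; ring
  have hc2 : ∀ (j : Fin 3) (x : ℝ × ℝ), B.coord j (f 0 + f 1 + f 2 - (x + x)) =
      B.coord j (f 0) + B.coord j (f 1) + B.coord j (f 2) - 2 * B.coord j x := by
    intro j x
    have h1 : f 0 + f 1 + f 2 - (x + x) = ((f 0 - x) + (f 1 - x) + (f 2 - x)) +ᵥ x := by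
      rw [vadd_eq_add]; abel
    rw [h1, AffineMap.map_vadd]
    simp only [map_add, ← vsub_eq_sub, AffineMap.linearMap_vsub]
    simp [vsub_eq_sub, vadd_eq_add]; ring
  -- lattice structure
  set vec : Fin 3 → ℤ × ℤ := ![v₁, v₂, v₃] with hvec
  have hfv : ∀ i, f i = latticeEmbed (vec i) := by
    intro i; fin_cases i <;> rfl
  have hpos : ∀ j, 0 < B.coord j (latticeEmbed p) := by
    have := hp; rw [hInt] at this; exact this
  obtain ⟨p₀, hp₀, hu⟩ := hint
  have huniq : ∀ q : ℤ × ℤ, latticeEmbed q ∈ interior T → q = p :=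
    fun q hq => (hu q hq).trans (hu p hp).symm
  by_cases hhalf : ∃ i, 1 / 2 ≤ B.coord i (latticeEmbed p)
  · exfalso
    obtain ⟨i, hi⟩ := hhalf
    have hq : latticeEmbed (p + p - vec i) = latticeEmbed p + (latticeEmbed p - f i) := by
      rw [hfv i]
      simp only [latticeEmbed, Prod.ext_iff, Prod.fst_sub, Prod.snd_sub, Prod.smul_fst,
        Prod.smul_snd, Prod.fst_add, Prod.snd_add, smul_eq_mul]
      push_cast
      constructor <;> ring
    have hβ : ∀ j, B.coord j (latticeEmbed (p + p - vec i))
        = 2 * B.coord j (latticeEmbed p) - (if j = i then 1 else 0) := by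
      intro j; rw [hq, hc1, hco]
    by_cases hgt : 1 / 2 < B.coord i (latticeEmbed p)
    · have hqint : latticeEmbed (p + p - vec i) ∈ interior T := by
        rw [hInt]; intro j; rw [hβ]
        rcases eq_or_ne j i with h | h
        · subst h; rw [if_pos rfl]; linarith
        · rw [if_neg h]; linarith [hpos j]
      have heq : p + p - vec i = p := huniq _ hqint
      have h2 : vec i = p := (add_left_cancel (sub_eq_iff_eq_add.mp heq)).symm
      obtain ⟨j, hj⟩ : ∃ j : Fin 3, j ≠ i := by fin_cases i <;> decide
      have hxz : B.coord j (latticeEmbed p) = 0 := by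
        rw [← h2, ← hfv i, hco, if_neg hj]
      linarith [hpos j]
    · have hi2 : B.coord i (latticeEmbed p) = 1 / 2 := le_antisymm (not_lt.1 hgt) hi
      have hqfr : latticeEmbed (p + p - vec i) ∈ frontier T := by
        rw [hclosed.frontier_eq, hInt]
        constructor
        · rw [hCl]; intro j; rw [hβ]
          rcases eq_or_ne j i with h | h
          · subst h; rw [if_pos rfl, hi2]; norm_num
          · rw [if_neg h]; linarith [hpos j]
        · intro hcon
          have hci := hcon i
          rw [hβ, if_pos rfl, hi2] at hci
          norm_num at hci
      obtain ⟨k, hk⟩ : ∃ k, p + p - vec i = vec k := by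
        rcases hbdry _ hqfr with h | h | h
        exacts [⟨0, h⟩, ⟨1, h⟩, ⟨2, h⟩]
      have hβk : ∀ j, B.coord j (latticeEmbed (p + p - vec i))
          = if j = k then 1 else 0 := by
        intro j; rw [hk, ← hfv k, hco]
      have hik : k ≠ i := by
        intro h
        have h1 := hβk i
        rw [hβ, if_pos rfl, hi2, h, if_pos rfl] at h1
        norm_num at h1
      obtain ⟨j, hji, hjk⟩ : ∃ j : Fin 3, j ≠ i ∧ j ≠ k := by
        fin_cases i <;> fin_cases k <;>
          first
            | exact absurd rfl hik
            | decide
      have h1 := hβk j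
      rw [hβ, if_neg hji, if_neg hjk] at h1
      linarith [hpos j]
  · push_neg at hhalf
    have hq : latticeEmbed (v₁ + v₂ + v₃ - (p + p))
        = f 0 + f 1 + f 2 - (latticeEmbed p + latticeEmbed p) := by
      rw [hfv 0, hfv 1, hfv 2]
      show latticeEmbed _ = latticeEmbed v₁ + latticeEmbed v₂ + latticeEmbed v₃ - _
      simp only [latticeEmbed, Prod.ext_iff, Prod.fst_sub, Prod.snd_sub, Prod.smul_fst,
        Prod.smul_snd, Prod.fst_add, Prod.snd_add, smul_eq_mul]
      push_cast
      constructor <;> ring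
    have hsum : ∀ j, B.coord j (f 0) + B.coord j (f 1) + B.coord j (f 2) = 1 := by
      intro j; fin_cases j <;> simp [hco]
    have hqint : latticeEmbed (v₁ + v₂ + v₃ - (p + p)) ∈ interior T := by
      rw [hInt]; intro j
      rw [hq, hc2, hsum]
      linarith [hhalf j]
    have heq : v₁ + v₂ + v₃ - (p + p) = p := huniq _ hqint
    have h2 : v₁ + v₂ + v₃ = p + (p + p) := sub_eq_iff_eq_add.mp heq
    rw [h2]
    abel
end

section
/- Let T_i = conv{p_{n1}, p_{s1}, p_{s2}} and T_j = conv{p_{n2}, p_{s1}, p_{s2}} be two unimodular lattice triangles in Z^2 sharing the edge {p_{s1}, p_{s2}}, with p_{n1} and p_{n2} on opposite sides of the line through p_{s1}, p_{s2}. Choose coordinates so that p_{s1}^2 = p_{s2}^2 =: y_0 and p_{s1}^1 = p_{n1}^1. Then every point (x, y) ∈ conv(T_i ∪ T_j) satisfies y_0 - 1 ≤ y ≤ y_0 + 1, and every non-vertex lattice point of conv(T_i ∪ T_j) has second coordinate equal to y_0. -/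
lemma latticeEmbed_inj : Function.Injective latticeEmbed := by
  intro p q h
  have h1 : (p.1 : ℝ) = q.1 := congrArg Prod.fst h
  have h2 : (p.2 : ℝ) = q.2 := congrArg Prod.snd h
  exact Prod.ext (by exact_mod_cast h1) (by exact_mod_cast h2)

/-- If every point of `S` has second coordinate `≤ c` and `v` is the unique point of `S`
at level `c`, then any point of the hull at level `c` equals `v`. -/
lemma face_unique_top {S : Set (ℝ × ℝ)} {v : ℝ × ℝ} {c : ℝ}
    (hle : ∀ s ∈ S, s.2 ≤ c) (huniq : ∀ s ∈ S, s.2 = c → s = v)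
    {q : ℝ × ℝ} (hq : q ∈ convexHull ℝ S) (hqc : q.2 = c) : q = v := by
  have hGconv : Convex ℝ {q : ℝ × ℝ | q.2 ≤ c ∧ (q.2 = c → q = v)} := by
    intro x hx y hy a b ha hb hab
    obtain ⟨hx1, hx2⟩ := hx
    obtain ⟨hy1, hy2⟩ := hy
    have hq2 : (a • x + b • y).2 = a * x.2 + b * y.2 := rfl
    have hle' : a * x.2 + b * y.2 ≤ c := by
      calc a * x.2 + b * y.2 ≤ a * c + b * c := by
            gcongr <;> assumption
        _ = c := by rw [← add_mul, hab, one_mul]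
    refine ⟨by rw [hq2]; exact hle', ?_⟩
    intro heq
    rw [hq2] at heq
    rcases eq_or_lt_of_le ha with ha0 | ha0
    · have hb1 : b = 1 := by linarith
      have hxy : a • x + b • y = y := by rw [← ha0, hb1]; simp
      rw [hxy]
      refine hy2 ?_
      rw [← ha0, hb1] at heq
      simpa using heq
    · rcases eq_or_lt_of_le hb with hb0 | hb0
      · have ha1 : a = 1 := by linarith
        have hxy : a • x + b • y = x := by rw [← hb0, ha1]; simp
        rw [hxy]
        refine hx2 ?_
        rw [← hb0, ha1] at heq
        simpa using heq
      · have habc : a * c + b * c = c := by rw [← add_mul, hab, one_mul]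
        have hxc : x.2 = c := by
          by_contra hne
          have hlt : x.2 < c := lt_of_le_of_ne hx1 hne
          have t1 : a * x.2 < a * c := mul_lt_mul_of_pos_left hlt ha0
          have t2 : b * y.2 ≤ b * c := mul_le_mul_of_nonneg_left hy1 hb
          linarith
        have hyc : y.2 = c := by
          by_contra hne
          have hlt : y.2 < c := lt_of_le_of_ne hy1 hne
          have t1 : a * x.2 ≤ a * c := mul_le_mul_of_nonneg_left hx1 ha
          have t2 : b * y.2 < b * c := mul_lt_mul_of_pos_left hlt hb0
          linarith
        rw [hx2 hxc, hy2 hyc, ← add_smul, hab, one_smul]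
  have hGsub : S ⊆ {q : ℝ × ℝ | q.2 ≤ c ∧ (q.2 = c → q = v)} :=
    fun s hs => ⟨hle s hs, fun h => huniq s hs h⟩
  exact (convexHull_min hGsub hGconv hq).2 hqc

/-- Mirror version at the bottom level. -/
lemma face_unique_bot {S : Set (ℝ × ℝ)} {v : ℝ × ℝ} {c : ℝ}
    (hge : ∀ s ∈ S, c ≤ s.2) (huniq : ∀ s ∈ S, s.2 = c → s = v)
    {q : ℝ × ℝ} (hq : q ∈ convexHull ℝ S) (hqc : q.2 = c) : q = v := by
  have hGconv : Convex ℝ {q : ℝ × ℝ | c ≤ q.2 ∧ (q.2 = c → q = v)} := by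
    intro x hx y hy a b ha hb hab
    obtain ⟨hx1, hx2⟩ := hx
    obtain ⟨hy1, hy2⟩ := hy
    have hq2 : (a • x + b • y).2 = a * x.2 + b * y.2 := rfl
    have hle' : c ≤ a * x.2 + b * y.2 := by
      calc c = a * c + b * c := by rw [← add_mul, hab, one_mul]
        _ ≤ a * x.2 + b * y.2 := by gcongr <;> assumption
    refine ⟨by rw [hq2]; exact hle', ?_⟩
    intro heq
    rw [hq2] at heq
    rcases eq_or_lt_of_le ha with ha0 | ha0
    · have hb1 : b = 1 := by linarith
      have hxy : a • x + b • y = y := by rw [← ha0, hb1]; simp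
      rw [hxy]
      refine hy2 ?_
      rw [← ha0, hb1] at heq
      simpa using heq
    · rcases eq_or_lt_of_le hb with hb0 | hb0
      · have ha1 : a = 1 := by linarith
        have hxy : a • x + b • y = x := by rw [← hb0, ha1]; simp
        rw [hxy]
        refine hx2 ?_
        rw [← hb0, ha1] at heq
        simpa using heq
      · have habc : a * c + b * c = c := by rw [← add_mul, hab, one_mul]
        have hxc : x.2 = c := by
          by_contra hne
          have hlt : c < x.2 := lt_of_le_of_ne hx1 (Ne.symm hne)
          have t1 : a * c < a * x.2 := mul_lt_mul_of_pos_left hlt ha0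
          have t2 : b * c ≤ b * y.2 := mul_le_mul_of_nonneg_left hy1 hb
          linarith
        have hyc : y.2 = c := by
          by_contra hne
          have hlt : c < y.2 := lt_of_le_of_ne hy1 (Ne.symm hne)
          have t1 : a * c ≤ a * x.2 := mul_le_mul_of_nonneg_left hx1 ha
          have t2 : b * c < b * y.2 := mul_lt_mul_of_pos_left hlt hb0
          linarith
        rw [hx2 hxc, hy2 hyc, ← add_smul, hab, one_smul]
  have hGsub : S ⊆ {q : ℝ × ℝ | c ≤ q.2 ∧ (q.2 = c → q = v)} :=
    fun s hs => ⟨hge s hs, fun h => huniq s hs h⟩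
  exact (convexHull_min hGsub hGconv hq).2 hqc

lemma key (pn1 pn2 ps1 ps2 : ℤ × ℤ) (y₀ : ℤ)
    (hs1 : ps1.2 = y₀) (hs2 : ps2.2 = y₀)
    (h1 : pn1.2 = y₀ + 1) (h2 : pn2.2 = y₀ - 1)
    (C : Set (ℝ × ℝ))
    (hC : C = convexHull ℝ
      {latticeEmbed pn1, latticeEmbed pn2, latticeEmbed ps1, latticeEmbed ps2}) :
    (∀ q ∈ C, (y₀ : ℝ) - 1 ≤ q.2 ∧ q.2 ≤ (y₀ : ℝ) + 1) ∧
      (∀ p : ℤ × ℤ, latticeEmbed p ∈ C → p ≠ pn1 → p ≠ pn2 → p.2 = y₀) := by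
  subst hC
  set S : Set (ℝ × ℝ) :=
    {latticeEmbed pn1, latticeEmbed pn2, latticeEmbed ps1, latticeEmbed ps2} with hS
  have hsnd : ∀ r : ℤ × ℤ, (latticeEmbed r).2 = (r.2 : ℝ) := fun r => rfl
  have hsub : S ⊆ {q : ℝ × ℝ | (y₀ : ℝ) - 1 ≤ q.2 ∧ q.2 ≤ (y₀ : ℝ) + 1} := by
    intro q hq
    simp only [hS, Set.mem_insert_iff, Set.mem_singleton_iff] at hq
    rcases hq with h | h | h | h <;> subst h <;> rw [Set.mem_setOf_eq, hsnd]
    · rw [h1]; constructor <;> push_cast <;> linarith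
    · rw [h2]; constructor <;> push_cast <;> linarith
    · rw [hs1]; constructor <;> push_cast <;> linarith
    · rw [hs2]; constructor <;> push_cast <;> linarith
  have slab_convex : Convex ℝ {q : ℝ × ℝ | (y₀ : ℝ) - 1 ≤ q.2 ∧ q.2 ≤ (y₀ : ℝ) + 1} := by
    intro x hx y hy a b ha hb hab
    obtain ⟨hx1, hx2⟩ := hx
    obtain ⟨hy1, hy2⟩ := hy
    have hq2 : (a • x + b • y).2 = a * x.2 + b * y.2 := rfl
    refine ⟨?_, ?_⟩ <;> rw [hq2]
    · calc (y₀ : ℝ) - 1 = a * ((y₀ : ℝ) - 1) + b * ((y₀ : ℝ) - 1) := by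
            rw [← add_mul, hab, one_mul]
        _ ≤ a * x.2 + b * y.2 := by gcongr <;> assumption
    · calc a * x.2 + b * y.2 ≤ a * ((y₀ : ℝ) + 1) + b * ((y₀ : ℝ) + 1) := by
            gcongr <;> assumption
        _ = (y₀ : ℝ) + 1 := by rw [← add_mul, hab, one_mul]
  have part1 : ∀ q ∈ convexHull ℝ S, (y₀ : ℝ) - 1 ≤ q.2 ∧ q.2 ≤ (y₀ : ℝ) + 1 :=
    fun q hq => convexHull_min hsub slab_convex hq
  refine ⟨part1, ?_⟩
  intro p hp hp1 hp2
  have hb := part1 _ hp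
  rw [hsnd] at hb
  have hb1' : y₀ - 1 ≤ p.2 := by
    have : ((y₀ - 1 : ℤ) : ℝ) ≤ (p.2 : ℝ) := by push_cast; linarith [hb.1]
    exact_mod_cast this
  have hb2' : p.2 ≤ y₀ + 1 := by
    have : ((p.2 : ℤ) : ℝ) ≤ ((y₀ + 1 : ℤ) : ℝ) := by push_cast; linarith [hb.2]
    exact_mod_cast this
  rcases (by omega : p.2 = y₀ - 1 ∨ p.2 = y₀ ∨ p.2 = y₀ + 1) with hp3 | hp3 | hp3
  · exfalso
    have huniq : ∀ s ∈ S, s.2 = (y₀ : ℝ) - 1 → s = latticeEmbed pn2 := by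
      intro s hs hsc
      simp only [hS, Set.mem_insert_iff, Set.mem_singleton_iff] at hs
      rcases hs with h | h | h | h <;> subst h <;> rw [hsnd] at hsc
      · exfalso; rw [h1] at hsc; push_cast at hsc; linarith
      · exfalso; rw [hs1] at hsc; push_cast at hsc; linarith
      · exfalso; rw [hs2] at hsc; push_cast at hsc; linarith
    have heq : latticeEmbed p = latticeEmbed pn2 := by
      refine face_unique_bot (fun s hs => (hsub hs).1) huniq hp ?_
      rw [hsnd, hp3]; push_cast; ring
    exact hp2 (latticeEmbed_inj heq)
  · exact hp3
  · exfalso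
    have huniq : ∀ s ∈ S, s.2 = (y₀ : ℝ) + 1 → s = latticeEmbed pn1 := by
      intro s hs hsc
      simp only [hS, Set.mem_insert_iff, Set.mem_singleton_iff] at hs
      rcases hs with h | h | h | h <;> subst h <;> rw [hsnd] at hsc
      · exfalso; rw [h2] at hsc; push_cast at hsc; linarith
      · exfalso; rw [hs1] at hsc; push_cast at hsc; linarith
      · exfalso; rw [hs2] at hsc; push_cast at hsc; linarith
    have heq : latticeEmbed p = latticeEmbed pn1 := by
      refine face_unique_top (fun s hs => (hsub hs).2) huniq hp ?_
      rw [hsnd, hp3]; push_cast; ring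
    exact hp1 (latticeEmbed_inj heq)

/-- `|det(b - a, c - a)| = 1`: the lattice triangle with vertices `a, b, c`
is unimodular. -/
def IsUnimodularTriangle (a b c : ℤ × ℤ) : Prop :=
  ((b.1 - a.1) * (c.2 - a.2) - (b.2 - a.2) * (c.1 - a.1)).natAbs = 1

/-- Two unimodular lattice triangles sharing the edge `{p_{s1}, p_{s2}}`, with
apexes `p_{n1}`, `p_{n2}` on opposite sides, in coordinates where the shared
edge is horizontal at height `y₀` and the edge `{p_{s1}, p_{n1}}` is vertical:
every point of the convex hull of the union has second coordinate between
`y₀ - 1` and `y₀ + 1`, and every non-vertex lattice point of the hull has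
second coordinate exactly `y₀`. -/
theorem points_of_union_of_unimodular_triangles
    (pn1 pn2 ps1 ps2 : ℤ × ℤ) (y₀ : ℤ)
    (hs1 : ps1.2 = y₀) (hs2 : ps2.2 = y₀) (hvert : ps1.1 = pn1.1)
    (hTi : IsUnimodularTriangle pn1 ps1 ps2)
    (hTj : IsUnimodularTriangle pn2 ps1 ps2)
    (hopp : (pn1.2 - y₀) * (pn2.2 - y₀) < 0)
    (C : Set (ℝ × ℝ))
    (hC : C = convexHull ℝ
      {latticeEmbed pn1, latticeEmbed pn2, latticeEmbed ps1, latticeEmbed ps2}) :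
    (∀ q ∈ C, (y₀ : ℝ) - 1 ≤ q.2 ∧ q.2 ≤ (y₀ : ℝ) + 1) ∧
      (∀ p : ℤ × ℤ, latticeEmbed p ∈ C →
        p ≠ pn1 → p ≠ pn2 → p ≠ ps1 → p ≠ ps2 → p.2 = y₀) := by
  unfold IsUnimodularTriangle at hTi hTj
  have e1 : (ps1.1 - pn1.1) * (ps2.2 - pn1.2) - (ps1.2 - pn1.2) * (ps2.1 - pn1.1)
      = (pn1.2 - y₀) * (ps2.1 - pn1.1) := by
    rw [hvert, hs1, hs2]; ring
  have e2 : (ps1.1 - pn2.1) * (ps2.2 - pn2.2) - (ps1.2 - pn2.2) * (ps2.1 - pn2.1)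
      = (pn2.2 - y₀) * (ps2.1 - pn1.1) := by
    rw [hs1, hs2, hvert]; ring
  rw [e1, Int.natAbs_mul] at hTi
  rw [e2, Int.natAbs_mul] at hTj
  have hA : (pn1.2 - y₀).natAbs = 1 := Nat.eq_one_of_mul_eq_one_right hTi
  have hB : (ps2.1 - pn1.1).natAbs = 1 := Nat.eq_one_of_mul_eq_one_left hTi
  have hA2 : (pn2.2 - y₀).natAbs = 1 := Nat.eq_one_of_mul_eq_one_right hTj
  have hcases : (pn1.2 = y₀ + 1 ∧ pn2.2 = y₀ - 1) ∨ (pn1.2 = y₀ - 1 ∧ pn2.2 = y₀ + 1) := by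
    have h1' : pn1.2 = y₀ + 1 ∨ pn1.2 = y₀ - 1 := by omega
    have h2' : pn2.2 = y₀ + 1 ∨ pn2.2 = y₀ - 1 := by omega
    rcases h1' with h | h <;> rcases h2' with h' | h' <;>
      rw [h, h'] at hopp
    · exfalso; nlinarith
    · exact Or.inl ⟨h, h'⟩
    · exact Or.inr ⟨h, h'⟩
    · exfalso; nlinarith
  rcases hcases with ⟨ha, hb⟩ | ⟨ha, hb⟩
  · obtain ⟨P1, P2⟩ := key pn1 pn2 ps1 ps2 y₀ hs1 hs2 ha hb C hC
    exact ⟨P1, fun p hp a b _ _ => P2 p hp a b⟩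
  · rw [Set.insert_comm] at hC
    obtain ⟨P1, P2⟩ := key pn2 pn1 ps1 ps2 y₀ hs1 hs2 hb ha C hC
    exact ⟨P1, fun p hp a b _ _ => P2 p hp b a⟩
end
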